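/- Let M be a smooth closed manifold (compact, without boundary) and let f : M → ℝ be a smooth function with 0 ≤ f(x) ≤ 1 for all x ∈ M and such that every critical point x of f satisfies f(x) = 0 or f(x) = 1. Let a ∈ (0,1). Then for every point x with f(x) ≤ a, the connected component of x in the sublevel set {y ∈ M | f(y) ≤ a} contains a point z with f(z) = 0. -/

import Mathlib

open Manifold Filter Topology Set

/-- For a Reeb function `f` on a smooth closed manifold and `a ∈ (0,1)`, every connected
component of the sublevel set `{f ≤ a}` contains a point where `f` vanishes. -/
theorem stmt_6
    {E : Type*} [NormedAddCommGroup E] [NormedSpace ℝ E] [FiniteDimensional ℝ E]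
    {H : Type*} [TopologicalSpace H] (I : ModelWithCorners ℝ E H) [I.Boundaryless]
    (M : Type*) [TopologicalSpace M] [ChartedSpace H M] [IsManifold I (⊤ : ℕ∞) M]
    [T2Space M] [CompactSpace M]
    (f : M → ℝ)
    (hf : ContMDiff I 𝓘(ℝ) (⊤ : ℕ∞) f)
    (hrange : ∀ x, f x ∈ Set.Icc (0 : ℝ) 1)
    (hcrit : ∀ x, mfderiv I 𝓘(ℝ) f x = 0 → f x = 0 ∨ f x = 1)
    (a : ℝ) (ha : a ∈ Set.Ioo (0 : ℝ) 1) :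
    ∀ x : M, f x ≤ a →
      ∃ z ∈ connectedComponentIn {y : M | f y ≤ a} x, f z = 0 := by
  intro x hx
  set S : Set M := {y : M | f y ≤ a} with hSdef
  have hxS : x ∈ S := hx
  set C := connectedComponentIn S x with hCdef
  have hCS : C ⊆ S := connectedComponentIn_subset S x
  have hSclosed : IsClosed S := isClosed_le hf.continuous continuous_const
  -- C is compact
  haveI : CompactSpace S := isCompact_iff_compactSpace.mp hSclosed.isCompact
  have hCcompact : IsCompact C := by
    rw [hCdef, connectedComponentIn_eq_image hxS]
    exact (isClosed_connectedComponent.isCompact).image continuous_subtype_val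
  have hxC : x ∈ C := mem_connectedComponentIn hxS
  obtain ⟨z, hzC, hzmin⟩ := hCcompact.exists_isMinOn ⟨x, hxC⟩ hf.continuous.continuousOn
  by_cases hz0 : f z = 0
  · exact ⟨z, hzC, hz0⟩
  exfalso
  have hzpos : 0 < f z := lt_of_le_of_ne (hrange z).1 (Ne.symm hz0)
  have hza : f z ≤ a := hCS hzC
  -- the derivative at z is nonzero
  have hL : mfderiv I 𝓘(ℝ) f z ≠ 0 := by
    intro h0
    rcases hcrit z h0 with h | h
    · exact hz0 h
    · exact absurd (h ▸ hza) (not_le.mpr ha.2)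
  set e := extChartAt I z with hedef
  set p := e z with hpdef
  -- F is f written in the chart
  set F : E → ℝ := fun y => f (e.symm y) with hFdef
  have hFeq : writtenInExtChartAt I 𝓘(ℝ) z f = F := by
    funext y
    simp [writtenInExtChartAt, hFdef, hedef, chartAt_self_eq]
  set L : E →L[ℝ] ℝ := mfderiv I 𝓘(ℝ) f z with hLdef
  have hF : HasFDerivAt F L p := by
    have h1 : HasFDerivWithinAt (writtenInExtChartAt I 𝓘(ℝ) z f) L (range I) (extChartAt I z z) :=
      (hf.mdifferentiable (by simp) z).hasMFDerivAt.2
    rw [I.range_eq_univ, hasFDerivWithinAt_univ, hFeq] at h1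
    exact h1
  -- find v with L v = -1
  obtain ⟨u, hu⟩ : ∃ u : E, L u ≠ 0 := by
    by_contra h
    push_neg at h
    exact hL (ContinuousLinearMap.ext fun u => h u)
  set v : E := (-(L u)⁻¹) • u with hvdef
  have hLv : L v = -1 := by
    have : L v = (-(L u)⁻¹) • (L u) := by rw [hvdef, map_smul]
    rw [this, smul_eq_mul]
    field_simp
  -- the curve in the chart
  set c : ℝ → E := fun t => p + t • v with hcdef
  have hcont : Continuous c := by
    apply continuous_const.add
    exact continuous_id.smul continuous_const
  have hc0 : c 0 = p := by simp [hcdef]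
  have hcderiv : HasDerivAt c v 0 := by
    have h1 : HasDerivAt (fun t : ℝ => t • v) ((1 : ℝ) • v) 0 :=
      (hasDerivAt_id 0).smul_const v
    rw [one_smul] at h1
    exact h1.const_add p
  set h : ℝ → ℝ := fun t => F (c t) with hhdef
  have hh : HasDerivAt h (-1) 0 := by
    have h1 : HasFDerivAt F L (c 0) := by rw [hc0]; exact hF
    have h2 := h1.comp_hasDerivAt 0 hcderiv
    rw [hLv] at h2
    exact h2
  have hh0 : h 0 = f z := by
    rw [hhdef]; simp only [hc0, hFdef, hpdef, hedef]
    rw [extChartAt_to_inv]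
  -- slope eventually negative
  have hslope : Tendsto (slope h 0) (𝓝[≠] (0:ℝ)) (𝓝 (-1)) :=
    hasDerivAt_iff_tendsto_slope.mp hh
  have hev : ∀ᶠ s in 𝓝[>] (0:ℝ), h s < h 0 := by
    have h1 : ∀ᶠ s in 𝓝[≠] (0:ℝ), slope h 0 s < 0 :=
      hslope.eventually_lt_const (by norm_num)
    have h2 : ∀ᶠ s in 𝓝[>] (0:ℝ), slope h 0 s < 0 :=
      h1.filter_mono (nhdsWithin_mono 0 fun s hs => ne_of_gt hs)
    filter_upwards [h2, self_mem_nhdsWithin] with s hs hs'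
    rw [slope_def_field] at hs
    have : (h s - h 0) / (s - 0) < 0 := hs
    rw [sub_zero] at this
    have hspos : (0:ℝ) < s := hs'
    rcases div_neg_iff.mp this with ⟨h3, h4⟩ | ⟨h3, h4⟩ <;> linarith
  obtain ⟨δ₂, hδ₂pos, hδ₂⟩ := mem_nhdsGT_iff_exists_Ioc_subset.mp hev
  -- target membership for small t
  have hT : {t : ℝ | c t ∈ e.target} ∈ 𝓝 (0:ℝ) := by
    apply hcont.continuousAt.preimage_mem_nhds
    rw [hc0]
    exact (isOpen_extChartAt_target z).mem_nhds (mem_extChartAt_target z)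
  obtain ⟨δ₁, hδ₁pos, hball⟩ := Metric.mem_nhds_iff.mp hT
  set δ : ℝ := min δ₂ (δ₁ / 2) with hδdef
  have hδpos : 0 < δ := lt_min hδ₂pos (by linarith)
  have htgt : ∀ t ∈ Set.Icc (0:ℝ) δ, c t ∈ e.target := by
    intro t ht
    apply hball
    rw [Metric.mem_ball, Real.dist_eq, sub_zero, abs_of_nonneg ht.1]
    calc t ≤ δ := ht.2
      _ ≤ δ₁ / 2 := min_le_right _ _
      _ < δ₁ := by linarith
  -- the connected curve in M
  set γ : ℝ → M := fun t => e.symm (c t) with hγdef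
  set K : Set M := γ '' Set.Icc 0 δ with hKdef
  have hKconn : IsPreconnected K := by
    apply isPreconnected_Icc.image
    exact (continuousOn_extChartAt_symm z).comp hcont.continuousOn htgt
  have hzK : z ∈ K := by
    refine ⟨0, Set.left_mem_Icc.mpr hδpos.le, ?_⟩
    rw [hγdef]; simp only [hc0, hpdef, hedef]
    exact extChartAt_to_inv z
  have hfγ : ∀ t, f (γ t) = h t := fun t => rfl
  have hKS : K ⊆ S := by
    rintro y ⟨t, ht, rfl⟩
    show f (γ t) ≤ a
    rw [hfγ]
    rcases eq_or_lt_of_le ht.1 with h0 | h0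
    · rw [← h0, hh0]; exact hza
    · have : h t < h 0 := hδ₂ ⟨h0, le_trans ht.2 (min_le_left _ _)⟩
      rw [hh0] at this
      linarith
  have hKC : K ⊆ C := by
    have h1 : K ⊆ connectedComponentIn S z :=
      hKconn.subset_connectedComponentIn hzK hKS
    rwa [← connectedComponentIn_eq hzC] at h1
  have hδK : γ δ ∈ K := ⟨δ, Set.right_mem_Icc.mpr hδpos.le, rfl⟩
  have : f z ≤ f (γ δ) := hzmin (hKC hδK)
  rw [hfγ] at this
  have : h δ < h 0 := hδ₂ ⟨hδpos, min_le_left _ _⟩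
  rw [hh0] at this
  linarith
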